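/- Existence of a degenerate partition: Let G be a finite simple graph, h : V(G) → {0,1}, and a, b : V(G) → ℤ≥0 with d_G(u) = a(u) + b(u) + h(u) and min{a(u), b(u)} ≥ 1 for every vertex u. If G has no (a,b)-feasible pair, then there exists a partition (X_1, X_2) of V(G) into non-empty sets such that: every non-empty subset X' ⊆ X_1 contains a vertex x with d_{X'}(x) ≤ a(x), and every non-empty subset X' ⊆ X_2 contains a vertex x with d_{X'}(x) ≤ b(x) + h(x) − 1. -/

import Mathlib

/-- `(A, B)` forms an `(a,b)`-feasible pair in `G`. -/
def FeasiblePair {V : Type*} [DecidableEq V] (G : SimpleGraph V) [DecidableRel G.Adj]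
    (a b : V → ℕ) : Prop :=
  ∃ A B : Finset V, A.Nonempty ∧ B.Nonempty ∧ Disjoint A B ∧
    (∀ u ∈ A, a u ≤ (A.filter (G.Adj u)).card) ∧
    (∀ v ∈ B, b v ≤ (B.filter (G.Adj v)).card)

/-- Existence of a degenerate partition (Claim 4). -/
theorem exists_degenerate_partition {V : Type*} [Fintype V] [DecidableEq V] [Nonempty V]
    (G : SimpleGraph V) [DecidableRel G.Adj] (a b h : V → ℕ)
    (hh : ∀ u, h u ≤ 1)
    (hdeg : ∀ u : V, G.degree u = a u + b u + h u)
    (ha : ∀ u, 1 ≤ a u) (hb : ∀ u, 1 ≤ b u)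
    (hnf : ¬ FeasiblePair G a b) :
    ∃ X1 X2 : Finset V, X1.Nonempty ∧ X2.Nonempty ∧ Disjoint X1 X2 ∧
      X1 ∪ X2 = Finset.univ ∧
      (∀ X' ⊆ X1, X'.Nonempty → ∃ x ∈ X', (X'.filter (G.Adj x)).card ≤ a x) ∧
      (∀ X' ⊆ X2, X'.Nonempty → ∃ x ∈ X', (X'.filter (G.Adj x)).card + 1 ≤ b x + h x) := by
  classical
  -- 2-meager property
  set M2 : Finset V → Prop :=
    fun X => ∀ X' ⊆ X, X'.Nonempty → ∃ x ∈ X', (X'.filter (G.Adj x)).card + 1 ≤ b x + h x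
    with hM2def
  -- singletons are 2-meager
  have hsing : ∀ v : V, M2 {v} := by
    intro v X' hX' hne
    obtain ⟨x, hx⟩ := hne
    refine ⟨x, hx, ?_⟩
    have hxv : x = v := Finset.mem_singleton.mp (hX' hx)
    have hcard : (X'.filter (G.Adj x)).card = 0 := by
      rw [Finset.card_eq_zero, Finset.filter_eq_empty_iff]
      intro y hy hadj
      have hyv : y = v := Finset.mem_singleton.mp (hX' hy)
      subst hxv hyv
      exact G.loopless.irrefl _ hadj
    have := hb x
    omega
  -- choose a 2-meager set of maximal cardinality
  have hfamne : (Finset.univ.powerset.filter (fun X => M2 X)).Nonempty := by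
    refine ⟨{Classical.arbitrary V}, ?_⟩
    simp only [Finset.mem_filter, Finset.mem_powerset]
    exact ⟨Finset.subset_univ _, hsing _⟩
  obtain ⟨X2, hX2mem, hX2max⟩ :=
    Finset.exists_max_image (Finset.univ.powerset.filter (fun X => M2 X)) Finset.card hfamne
  have hX2M : M2 X2 := (Finset.mem_filter.mp hX2mem).2
  have hX2ne : X2.Nonempty := by
    rcases Finset.eq_empty_or_nonempty X2 with hX | hX
    · exfalso
      have h1 := hX2max {Classical.arbitrary V} (by
        simp only [Finset.mem_filter, Finset.mem_powerset]
        exact ⟨Finset.subset_univ _, hsing _⟩)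
      simp [hX] at h1
    · exact hX
  -- maximality: inserting any new vertex kills 2-meagerness
  have hmaxins : ∀ u : V, u ∉ X2 → ¬ M2 (insert u X2) := by
    intro u hu hM
    have h1 := hX2max (insert u X2) (by
      simp only [Finset.mem_filter, Finset.mem_powerset]
      exact ⟨Finset.subset_univ _, hM⟩)
    rw [Finset.card_insert_of_notMem hu] at h1
    omega
  -- every vertex has a neighbor (degree ≥ 2)
  have hnbr : ∀ v : V, ∃ w, G.Adj v w := by
    intro v
    have : 0 < G.degree v := by
      rw [hdeg v]; have := ha v; omega
    rw [← SimpleGraph.card_neighborFinset_eq_degree, Finset.card_pos] at this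
    obtain ⟨w, hw⟩ := this
    exact ⟨w, (SimpleGraph.mem_neighborFinset G v w).mp hw⟩
  by_cases hX2univ : X2 = Finset.univ
  · -- whole vertex set is 2-meager; split off a single vertex
    obtain ⟨v⟩ := ‹Nonempty V›
    obtain ⟨w, hvw⟩ := hnbr v
    refine ⟨{v}, Finset.univ.erase v, ⟨v, Finset.mem_singleton_self v⟩,
      ⟨w, Finset.mem_erase.mpr ⟨(G.ne_of_adj hvw).symm, Finset.mem_univ w⟩⟩, ?_, ?_, ?_, ?_⟩
    · simp [Finset.disjoint_left]
    · ext x; by_cases hx : x = v <;> simp [hx]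
    · intro X' hX' hne
      obtain ⟨x, hx⟩ := hne
      refine ⟨x, hx, ?_⟩
      have hxv : x = v := Finset.mem_singleton.mp (hX' hx)
      have hcard : (X'.filter (G.Adj x)).card = 0 := by
        rw [Finset.card_eq_zero, Finset.filter_eq_empty_iff]
        intro y hy hadj
        have hyv : y = v := Finset.mem_singleton.mp (hX' hy)
        subst hxv hyv
        exact G.loopless.irrefl _ hadj
      omega
    · intro X' hX' hne
      exact hX2M X' (by rw [hX2univ]; exact Finset.subset_univ _) hne
  · -- X1 := complement of X2
    set X1 : Finset V := Finset.univ \ X2 with hX1def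
    have hX1ne : X1.Nonempty := by
      rcases Finset.eq_empty_or_nonempty X1 with hX | hX
      · exfalso; apply hX2univ
        apply Finset.eq_univ_of_forall
        intro x
        by_contra hxX2
        have : x ∈ X1 := Finset.mem_sdiff.mpr ⟨Finset.mem_univ x, hxX2⟩
        rw [hX] at this; exact absurd this (Finset.notMem_empty x)
      · exact hX
    refine ⟨X1, X2, hX1ne, hX2ne, Finset.sdiff_disjoint, ?_, ?_, fun X' hX' hne => hX2M X' hX' hne⟩
    · rw [Finset.sdiff_union_self_eq_union]; simp
    · -- X1 is 1-meager
      intro X' hX' hne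
      by_contra hcon
      push_neg at hcon
      -- every x ∈ X' has d_{X'}(x) ≥ a x + 1
      have hdense : ∀ x ∈ X', a x + 1 ≤ (X'.filter (G.Adj x)).card := by
        intro x hx; have := hcon x hx; omega
      obtain ⟨u, hu⟩ := hne
      have huX2 : u ∉ X2 := (Finset.mem_sdiff.mp (hX' hu)).2
      have hnotM := hmaxins u huX2
      simp only [hM2def] at hnotM
      push_neg at hnotM
      obtain ⟨Y, hYsub, hYne, hY⟩ := hnotM
      -- each y ∈ Y has d_Y(y) ≥ b y + h y
      have hYdense : ∀ y ∈ Y, b y + h y ≤ (Y.filter (G.Adj y)).card := by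
        intro y hy; have := hY y hy; omega
      -- u must be in Y, else Y contradicts 2-meagerness of X2
      have huY : u ∈ Y := by
        by_contra huY
        obtain ⟨x, hx, hxle⟩ := hX2M Y (fun z hz => by
          rcases Finset.mem_insert.mp (hYsub hz) with rfl | hz2
          · exact absurd hz huY
          · exact hz2) hYne
        have := hYdense x hx
        omega
      -- the feasible pair (X' \ {u}, Y)
      apply hnf
      refine ⟨X'.erase u, Y, ?_, hYne, ?_, ?_, fun v hv => le_trans (Nat.le_add_right _ _) (hYdense v hv)⟩
      · -- X'.erase u nonempty: u has a neighbor in X'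
        have h2 : 2 ≤ (X'.filter (G.Adj u)).card := by
          have := hdense u hu; have := ha u; omega
        have hpos : 0 < (X'.filter (G.Adj u)).card := by omega
        obtain ⟨w, hw⟩ := Finset.card_pos.mp hpos
        rw [Finset.mem_filter] at hw
        exact ⟨w, Finset.mem_erase.mpr ⟨fun hwu => G.loopless.irrefl u (hwu ▸ hw.2), hw.1⟩⟩
      · -- disjoint
        rw [Finset.disjoint_left]
        intro x hx hxY
        rw [Finset.mem_erase] at hx
        have hxX2 : x ∈ X2 := by
          rcases Finset.mem_insert.mp (hYsub hxY) with rfl | hz2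
          · exact absurd rfl hx.1
          · exact hz2
        exact (Finset.mem_sdiff.mp (hX' hx.2)).2 hxX2
      · -- degrees in X'.erase u
        intro x hx
        rw [Finset.mem_erase] at hx
        have hge := hdense x hx.2
        have : (X'.filter (G.Adj x)).card ≤ ((X'.erase u).filter (G.Adj x)).card + 1 := by
          rw [Finset.filter_erase]
          have hsub : X'.filter (G.Adj x) ⊆ insert u ((X'.filter (G.Adj x)).erase u) := by
            intro z hz
            by_cases hzu : z = u
            · exact Finset.mem_insert.mpr (Or.inl hzu)
            · exact Finset.mem_insert.mpr (Or.inr (Finset.mem_erase.mpr ⟨hzu, hz⟩))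
          calc (X'.filter (G.Adj x)).card ≤ _ := Finset.card_le_card hsub
            _ ≤ _ + 1 := Finset.card_insert_le _ _
        omega
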